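/- In the general Kuroda-type setup, if $\det T_{n-1} \neq 0$, then $K(\pi) \cap K[X_1, \ldots, X_n] = K[\pi] \cap K[X_1, \ldots, X_n]$, where $K(\pi)$ is the field of fractions of $K[\pi] = K[\pi_1, \ldots, \pi_{n-1}]$ and $K[X_1, \ldots, X_n]$ is the polynomial subring of the Laurent polynomial ring. -/

import Mathlib

/-- The general Kuroda-type element
`π i = Xₙ^(γ i) − X₁^(T i 1) ⋯ X_{n-1}^(T i (n-1)) · Xₙ^(β i)`
in the Laurent polynomial ring in `n + 1` variables, realized as the group algebra
`K[ℤ^(n+1)]`.  Here `T i` is the `i`-th row of the matrix `T_{n-1}` (whose diagonal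
entries are `-α i i` and off-diagonal entries `α i j`), and `β i = α i n ≥ 0`. -/
noncomputable def kurodaPi (K : Type*) [Field K] (n : ℕ)
    (T : Matrix (Fin n) (Fin n) ℤ) (β γ : Fin n → ℤ) (i : Fin n) :
    AddMonoidAlgebra K (Fin (n + 1) → ℤ) :=
  AddMonoidAlgebra.single (Fin.snoc (0 : Fin n → ℤ) (γ i)) 1 -
    AddMonoidAlgebra.single (Fin.snoc (T i) (β i)) 1

namespace Kuroda8
open MvPolynomial
noncomputable def Xm (K : Type*) [Field K] {G : Type*} [AddCommMonoid G] (m : G) :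
    AddMonoidAlgebra K G :=
  AddMonoidAlgebra.single m 1
variable {K : Type*} [Field K] {n : ℕ}
theorem Xm_mul {G : Type*} [AddCommMonoid G] (m m' : G) :
    Xm K m * Xm K m' = Xm K (m + m') := by
  simp [Xm, AddMonoidAlgebra.single_mul_single]
theorem Xm_zero {G : Type*} [AddCommMonoid G] : Xm K (0 : G) = 1 := rfl
theorem Xm_pow {G : Type*} [AddCommMonoid G] (k : ℕ) (m : G) :
    Xm K m ^ k = Xm K (k • m) := by
  simp [Xm, AddMonoidAlgebra.single_pow]
theorem Xm_ne_zero {G : Type*} [AddCommMonoid G] (m : G) : Xm K m ≠ 0 := by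
  simp [Xm]
theorem isUnit_Xm {G : Type*} [AddCommGroup G] (m : G) : IsUnit (Xm K m) :=
  IsUnit.of_mul_eq_one (Xm K (-m)) (by rw [Xm_mul, add_neg_cancel, Xm_zero])

theorem isIntegral_of_mem {R A : Type*} [CommRing R] [CommRing A] [Algebra R A]
    (S : Subalgebra R A) {y : A} (hy : y ∈ S) : IsIntegral (↥S) y := by
  have h : y = algebraMap (↥S) A ⟨y, hy⟩ := rfl
  rw [h]
  exact isIntegral_algebraMap

section Main
variable (T : Matrix (Fin n) (Fin n) ℤ) (β γ : Fin n → ℤ)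

/-- the exponent `(0, …, 0, 1)` (of the last variable) -/
def en : Fin (n + 1) → ℤ := Pi.single (Fin.last n) 1
/-- exponent of the "b" monomial of `π i` -/
def bv (i : Fin n) : Fin (n + 1) → ℤ := Fin.snoc (T i) (β i)
/-- exponent of the "a" monomial of `π i` -/
def av (i : Fin n) : Fin (n + 1) → ℤ := Fin.snoc (0 : Fin n → ℤ) (γ i)

theorem kuroda_eq (i : Fin n) :
    kurodaPi K n T β γ i = Xm K (av γ i) - Xm K (bv T β i) := rfl

theorem av_eq_smul (hγ : ∀ i, 1 ≤ γ i) (i : Fin n) :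
    av γ i = ((γ i).toNat : ℕ) • (en (n := n)) := by
  funext j
  refine Fin.lastCases ?_ (fun j' => ?_) j
  · simp [av, en, Fin.snoc_last, Int.toNat_of_nonneg (le_trans zero_le_one (hγ i))]
  · simp [av, en, Fin.snoc_castSucc, Pi.single_eq_of_ne (Fin.castSucc_lt_last j').ne]

/-- The matrix whose rows are `en` and the `bv i` -/
def M : Matrix (Fin (n + 1)) (Fin (n + 1)) ℤ :=
  Fin.cases (en (n := n)) (bv T β)

theorem detM (hdet : T.det ≠ 0) : (M T β).det ≠ 0 := by
  rw [Matrix.det_succ_row_zero]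
  have h0 : (M T β) 0 = (en (n := n)) := by
    unfold M; exact Fin.cases_zero
  rw [Fin.sum_univ_castSucc]
  have hz : ∀ j : Fin n, ((-1 : ℤ)) ^ (j.castSucc : ℕ) * (M T β) 0 j.castSucc *
      ((M T β).submatrix Fin.succ j.castSucc.succAbove).det = 0 := by
    intro j
    rw [h0]
    unfold en
    rw [Pi.single_eq_of_ne (Fin.castSucc_lt_last j).ne]
    ring
  rw [Finset.sum_congr rfl (fun j _ => hz j), Finset.sum_const_zero, zero_add]
  have hsub : (M T β).submatrix Fin.succ (Fin.last n).succAbove = T := by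
    ext i j
    simp only [Matrix.submatrix_apply, Fin.succAbove_last]
    have : (M T β) i.succ = bv T β i := by unfold M; exact Fin.cases_succ _
    rw [this]
    unfold bv
    exact Fin.snoc_castSucc _ _ _
  rw [h0, hsub]
  unfold en
  rw [Pi.single_eq_same]
  simp only [Fin.val_last, mul_one, one_mul]
  exact mul_ne_zero (pow_ne_zero _ (by norm_num)) hdet

/-- the family `(Xₙ, π 1, …, π n)` -/
noncomputable def vv : Fin (n + 1) → AddMonoidAlgebra K (Fin (n + 1) → ℤ) :=
  Fin.cases (Xm K (en (n := n))) (kurodaPi K n T β γ)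

/-- the evaluation map from the polynomial ring -/
noncomputable def θ : MvPolynomial (Fin (n + 1)) K →ₐ[K] AddMonoidAlgebra K (Fin (n + 1) → ℤ) :=
  aeval (vv T β γ)

/-- the polynomial `Z^{γ i} - Y i` mapping to the unit monomial `X^{b i}` -/
noncomputable def gp (i : Fin n) : MvPolynomial (Fin (n + 1)) K :=
  X 0 ^ (γ i).toNat - X i.succ

theorem θ_X0 : θ T β γ (X 0 : MvPolynomial (Fin (n + 1)) K) = Xm K (en (n := n)) := by
  simp [θ, vv]

theorem θ_Xsucc (i : Fin n) :
    θ T β γ (X i.succ : MvPolynomial (Fin (n + 1)) K) = kurodaPi K n T β γ i := by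
  simp [θ, vv]

theorem θ_g (hγ : ∀ i, 1 ≤ γ i) (i : Fin n) :
    θ T β γ (gp γ i) = Xm K (bv T β i) := by
  simp only [gp, map_sub, map_pow, θ_X0, θ_Xsucc, Xm_pow, kuroda_eq, ← av_eq_smul γ hγ]
  ring


section Inj

/-- the rational matrix of `M` -/
noncomputable def Mq : Matrix (Fin (n + 1)) (Fin (n + 1)) ℚ :=
  (Int.castRingHom ℚ).mapMatrix (M T β)

theorem isUnit_det_Mq (hdet : T.det ≠ 0) : IsUnit (Mq T β).det := by
  rw [Mq, ← RingHom.map_det]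
  exact isUnit_iff_ne_zero.mpr (Int.cast_ne_zero.mpr (detM T β hdet))

/-- the additive map sending the rows of `M` to the standard basis vectors -/
noncomputable def ρ : (Fin (n + 1) → ℤ) →+ (Fin (n + 1) → ℚ) where
  toFun m := Matrix.vecMul (fun j => (m j : ℚ)) (Mq T β)⁻¹
  map_zero' := by
    show Matrix.vecMul (fun j => ((0 : Fin (n + 1) → ℤ) j : ℚ)) (Mq T β)⁻¹ = 0
    have h : (fun j => ((0 : Fin (n + 1) → ℤ) j : ℚ)) = 0 := by funext j; simp
    rw [h, Matrix.zero_vecMul]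
  map_add' a b := by
    show Matrix.vecMul (fun j => ((a + b) j : ℚ)) (Mq T β)⁻¹ =
      Matrix.vecMul (fun j => (a j : ℚ)) (Mq T β)⁻¹ +
        Matrix.vecMul (fun j => (b j : ℚ)) (Mq T β)⁻¹
    have h : (fun j => ((a + b) j : ℚ)) = (fun j => (a j : ℚ)) + fun j => (b j : ℚ) := by
      funext j; simp
    rw [h, Matrix.add_vecMul]

theorem ρ_row (hdet : T.det ≠ 0) (k : Fin (n + 1)) :
    ρ T β (M T β k) = Pi.single k 1 := by
  show Matrix.vecMul (fun j => ((M T β k j : ℚ))) (Mq T β)⁻¹ = _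
  have h1 : (fun j => ((M T β k j : ℚ))) = Matrix.vecMul (Pi.single k 1) (Mq T β) := by
    rw [Matrix.single_vecMul]
    funext j
    simp [Mq]
  rw [h1, Matrix.vecMul_vecMul, Matrix.mul_nonsing_inv _ (isUnit_det_Mq T β hdet),
    Matrix.vecMul_one]

/-- transport to rational exponents -/
noncomputable def Φ : AddMonoidAlgebra K (Fin (n + 1) → ℤ) →ₐ[K]
    AddMonoidAlgebra K (Fin (n + 1) → ℚ) :=
  AddMonoidAlgebra.mapDomainAlgHom K K (ρ T β)

theorem Φ_Xm (m : Fin (n + 1) → ℤ) : Φ T β (Xm K m) = Xm K (ρ T β m) := by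
  simp [Φ, Xm]

/-- the involutive substitution `Z ↦ Z`, `Y i ↦ Z^{γ i} - Y i` -/
noncomputable def Θh : MvPolynomial (Fin (n + 1)) K →ₐ[K] MvPolynomial (Fin (n + 1)) K :=
  aeval (Fin.cases (X 0) (fun i => X 0 ^ (γ i).toNat - X i.succ))

theorem Θh_X0 : Θh γ (X 0 : MvPolynomial (Fin (n + 1)) K) = X 0 := by
  simp [Θh]

theorem Θh_Xsucc (i : Fin n) : Θh γ (X i.succ : MvPolynomial (Fin (n + 1)) K) =
    X 0 ^ (γ i).toNat - X i.succ := by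
  simp [Θh]

theorem Θh_inj : Function.Injective (Θh γ (K := K)) := by
  have hinv : (Θh γ (K := K)).comp (Θh γ) = AlgHom.id K _ := by
    apply MvPolynomial.algHom_ext
    intro j
    refine Fin.cases ?_ (fun i => ?_) j
    · simp [AlgHom.comp_apply, Θh_X0]
    · simp only [AlgHom.comp_apply, Θh_Xsucc, map_sub, map_pow, Θh_X0, AlgHom.id_apply]
      ring
  intro a b hab
  have := congrArg (Θh γ (K := K)) hab
  rwa [← AlgHom.comp_apply, ← AlgHom.comp_apply, hinv, AlgHom.id_apply, AlgHom.id_apply] at this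

/-- standard-basis monomials with rational exponents -/
noncomputable def w2 : Fin (n + 1) → AddMonoidAlgebra K (Fin (n + 1) → ℚ) :=
  fun j => Xm K (Pi.single j 1)

/-- the obvious injection of exponents -/
noncomputable def ν : (Fin (n + 1) →₀ ℕ) →+ (Fin (n + 1) → ℚ) where
  toFun u j := (u j : ℚ)
  map_zero' := by funext j; simp
  map_add' a b := by funext j; simp

theorem ν_inj : Function.Injective (ν (n := n)) := by
  intro a b hab
  ext j
  have h2 : ((a j : ℚ)) = ((b j : ℚ)) := congrFun hab j
  exact_mod_cast h2

theorem aeval_w2_eq :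
    (AddMonoidAlgebra.mapDomainAlgHom K K (ν (n := n)) :
      MvPolynomial (Fin (n + 1)) K →ₐ[K] AddMonoidAlgebra K (Fin (n + 1) → ℚ)) =
    aeval (w2 (K := K)) := by
  apply MvPolynomial.algHom_ext
  intro j
  rw [aeval_X]
  have hX : (X j : MvPolynomial (Fin (n + 1)) K) =
      AddMonoidAlgebra.single (Finsupp.single j 1) 1 :=
    (MvPolynomial.single_eq_monomial _ _).symm
  rw [hX]
  show AddMonoidAlgebra.mapDomain _ _ = _
  rw [AddMonoidAlgebra.mapDomain_single]
  have hexp : ν (Finsupp.single j 1) = (Pi.single j 1 : Fin (n + 1) → ℚ) := by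
    funext l
    show ((Finsupp.single j 1 : Fin (n+1) →₀ ℕ) l : ℚ) = _
    by_cases h : l = j
    · subst h; simp
    · simp [Finsupp.single_apply, Pi.single_apply, h, Ne.symm h]
  rw [hexp]
  rfl

theorem aeval_w2_inj : Function.Injective (aeval (w2 (K := K)) :
    MvPolynomial (Fin (n + 1)) K →ₐ[K] AddMonoidAlgebra K (Fin (n + 1) → ℚ)) := by
  rw [← aeval_w2_eq]
  exact AddMonoidAlgebra.mapDomain_injective ν_inj

theorem θ_inj (hγ : ∀ i, 1 ≤ γ i) (hdet : T.det ≠ 0) :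
    Function.Injective (θ T β γ (K := K)) := by
  have hM0 : M T β 0 = (en (n := n)) := by unfold M; exact Fin.cases_zero
  have hMs : ∀ i : Fin n, M T β i.succ = bv T β i := fun i => by
    unfold M; exact Fin.cases_succ _
  have hcomp : (Φ T β).comp (θ T β γ) = (aeval (w2 (K := K))).comp (Θh γ) := by
    apply MvPolynomial.algHom_ext
    intro j
    refine Fin.cases ?_ (fun i => ?_) j
    · rw [AlgHom.comp_apply, AlgHom.comp_apply, Θh_X0, aeval_X, θ_X0, Φ_Xm]
      rw [← hM0, ρ_row T β hdet]
      rfl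
    · simp only [AlgHom.comp_apply, Θh_Xsucc, θ_Xsucc, kuroda_eq, map_sub, map_pow,
        aeval_X, Φ_Xm]
      have h1 : ρ T β (bv T β i) = Pi.single i.succ 1 := by
        rw [← hMs i, ρ_row T β hdet]
      have h2 : ρ T β (av γ i) = ((γ i).toNat : ℕ) • (Pi.single 0 1 : Fin (n+1) → ℚ) := by
        rw [av_eq_smul γ hγ, AddMonoidHom.map_nsmul, ← hM0, ρ_row T β hdet]
      rw [h1, h2]
      show _ = w2 0 ^ (γ i).toNat - w2 i.succ
      rw [w2, w2, Xm_pow]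
  have hinjcomp : Function.Injective ((Φ T β).comp (θ T β γ) :
      MvPolynomial (Fin (n + 1)) K →ₐ[K] AddMonoidAlgebra K (Fin (n + 1) → ℚ)) := by
    rw [hcomp]
    intro a b hab
    exact Θh_inj γ (aeval_w2_inj (by simpa [AlgHom.comp_apply] using hab))
  intro a b hab
  exact hinjcomp (by simp only [AlgHom.comp_apply, hab])

end Inj

section Integral

/-- the subalgebra `K[π][Xₙ^{±1}, X^{-b i}]` over which the Laurent ring is integral -/
noncomputable def CC : Subalgebra K (AddMonoidAlgebra K (Fin (n + 1) → ℤ)) :=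
  Algebra.adjoin K
    (Set.range (kurodaPi K n T β γ) ∪ Set.range (fun i => Xm K (-(bv T β i))) ∪
      {Xm K (en (n := n)), Xm K (-(en (n := n)))})

theorem pi_mem_CC (i : Fin n) : kurodaPi K n T β γ i ∈ CC T β γ :=
  Algebra.subset_adjoin (by left; left; exact ⟨i, rfl⟩)

theorem Xm_neg_bv_mem_CC (i : Fin n) : Xm K (-(bv T β i)) ∈ CC T β γ :=
  Algebra.subset_adjoin (by left; right; exact ⟨i, rfl⟩)

theorem Xm_en_mem_CC : Xm K (en (n := n)) ∈ CC T β γ :=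
  Algebra.subset_adjoin (by right; left; rfl)

theorem Xm_neg_en_mem_CC : Xm K (-(en (n := n))) ∈ CC T β γ :=
  Algebra.subset_adjoin (by right; right; rfl)

theorem Xm_av_mem_CC (hγ : ∀ i, 1 ≤ γ i) (i : Fin n) : Xm K (av γ i) ∈ CC T β γ := by
  rw [av_eq_smul γ hγ, ← Xm_pow]
  exact pow_mem (Xm_en_mem_CC T β γ) _

theorem Xm_bv_mem_CC (hγ : ∀ i, 1 ≤ γ i) (i : Fin n) : Xm K (bv T β i) ∈ CC T β γ := by
  have h : Xm K (bv T β i) = Xm K (av γ i) - kurodaPi K n T β γ i := by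
    rw [kuroda_eq]; ring
  rw [h]
  exact sub_mem (Xm_av_mem_CC T β γ hγ i) (pi_mem_CC T β γ i)

theorem Xm_L2_mem_CC (hγ : ∀ i, 1 ≤ γ i) :
    ∀ m ∈ AddSubgroup.closure (Set.range (M T β)),
      Xm K m ∈ CC T β γ ∧ Xm K (-m) ∈ CC T β γ := by
  intro m hm
  induction hm using AddSubgroup.closure_induction with
  | mem z hz =>
    obtain ⟨k, rfl⟩ := hz
    refine Fin.cases ?_ (fun i => ?_) k
    · have h0 : M T β 0 = (en (n := n)) := by unfold M; exact Fin.cases_zero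
      rw [h0]
      exact ⟨Xm_en_mem_CC T β γ, Xm_neg_en_mem_CC T β γ⟩
    · have hs : M T β i.succ = bv T β i := by unfold M; exact Fin.cases_succ _
      rw [hs]
      exact ⟨Xm_bv_mem_CC T β γ hγ i, Xm_neg_bv_mem_CC T β γ i⟩
  | zero =>
    exact ⟨by rw [Xm_zero]; exact one_mem _,
      by rw [neg_zero, Xm_zero]; exact one_mem _⟩
  | add a b _ _ ha hb =>
    constructor
    · rw [← Xm_mul]; exact mul_mem ha.1 hb.1
    · rw [show -(a + b) = -a + -b by ring, ← Xm_mul]; exact mul_mem ha.2 hb.2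
  | neg a _ ha => exact ⟨ha.2, by rw [neg_neg]; exact ha.1⟩

theorem exists_nsmul_mem_L2 (hdet : T.det ≠ 0) (j : Fin (n + 1)) :
    ∃ N : ℕ, N ≠ 0 ∧
      ((N : ℤ) • Pi.single j 1 ∈ AddSubgroup.closure (Set.range (M T β))) := by
  set d := (M T β).det with hd
  have hdne : d ≠ 0 := detM T β hdet
  have hrow : (∑ k, (M T β).adjugate j k • M T β k) = d • (Pi.single j 1 : Fin (n + 1) → ℤ) := by
    funext l
    rw [Finset.sum_apply]
    have h1 : ∀ k, ((M T β).adjugate j k • M T β k) l = (M T β).adjugate j k * M T β k l :=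
      fun k => rfl
    rw [Finset.sum_congr rfl (fun k _ => h1 k), ← Matrix.mul_apply, Matrix.adjugate_mul]
    show _ = d * (Pi.single j 1 : Fin (n + 1) → ℤ) l
    by_cases h : j = l
    · subst h; simp [Matrix.one_apply]; rfl
    · simp [Matrix.smul_apply, Matrix.one_apply, h, Pi.single_apply, Ne.symm h]
  have hmem : d • (Pi.single j 1 : Fin (n + 1) → ℤ) ∈
      AddSubgroup.closure (Set.range (M T β)) := by
    rw [← hrow]
    exact AddSubgroup.sum_mem _ (fun k _ =>
      AddSubgroup.zsmul_mem _ (AddSubgroup.subset_closure (Set.mem_range_self k)) _)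
  refine ⟨d.natAbs, Int.natAbs_ne_zero.mpr hdne, ?_⟩
  rcases Int.natAbs_eq d with h | h
  · rw [← h]; exact hmem
  · have h2 : ((d.natAbs : ℤ)) = -d := by omega
    rw [h2, neg_smul]
    exact AddSubgroup.neg_mem _ hmem

theorem isIntegral_single (hγ : ∀ i, 1 ≤ γ i) (hdet : T.det ≠ 0) (j : Fin (n + 1)) :
    IsIntegral (↥(CC T β γ (K := K))) (Xm K ((Pi.single j 1 : Fin (n + 1) → ℤ))) ∧
    IsIntegral (↥(CC T β γ (K := K))) (Xm K (-(Pi.single j 1 : Fin (n + 1) → ℤ))) := by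
  obtain ⟨N, hN, hmem⟩ := exists_nsmul_mem_L2 T β hdet j
  have h1 := (Xm_L2_mem_CC T β γ (K := K) hγ _ hmem).1
  have h2 := (Xm_L2_mem_CC T β γ (K := K) hγ _ hmem).2
  have hNpos : 0 < N := Nat.pos_of_ne_zero hN
  constructor
  · apply IsIntegral.of_pow hNpos
    rw [Xm_pow, ← natCast_zsmul]
    exact isIntegral_of_mem _ h1
  · apply IsIntegral.of_pow hNpos
    rw [Xm_pow]
    have hsm : N • -(Pi.single j 1 : Fin (n + 1) → ℤ) = -((N : ℤ) • Pi.single j 1) := by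
      rw [smul_neg, ← natCast_zsmul]
    rw [hsm]
    exact isIntegral_of_mem _ h2

theorem Xm_single_int_mem (S : Subalgebra K (AddMonoidAlgebra K (Fin (n + 1) → ℤ)))
    (hS : ∀ j : Fin (n + 1), Xm K ((Pi.single j 1 : Fin (n + 1) → ℤ)) ∈ S ∧
      Xm K (-(Pi.single j 1 : Fin (n + 1) → ℤ)) ∈ S) :
    ∀ x : AddMonoidAlgebra K (Fin (n + 1) → ℤ), x ∈ S := by
  have hsingle : ∀ (j : Fin (n + 1)) (z : ℤ), Xm K (Pi.single j z) ∈ S := by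
    intro j z
    rcases le_or_gt 0 z with h | h
    · have : (Pi.single j z : Fin (n + 1) → ℤ) = z.toNat • (Pi.single j 1) := by
        funext l
        by_cases hl : l = j
        · subst hl; simp [Int.toNat_of_nonneg h]
        · simp [Pi.single_apply, hl]
      rw [this, ← Xm_pow]
      exact pow_mem (hS j).1 _
    · have : (Pi.single j z : Fin (n + 1) → ℤ) = (-z).toNat • (-(Pi.single j 1)) := by
        funext l
        by_cases hl : l = j
        · subst hl
          simp only [Pi.single_eq_same, Pi.smul_apply, Pi.neg_apply, smul_neg]
          rw [nsmul_eq_mul, Int.toNat_of_nonneg (by omega)]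
          ring
        · simp [Pi.single_apply, hl]
      rw [this, ← Xm_pow]
      exact pow_mem (hS j).2 _
  have hXm : ∀ m : Fin (n + 1) → ℤ, Xm K m ∈ S := by
    intro m
    have hsum : ∀ (s : Finset (Fin (n + 1))),
        Xm K (∑ j ∈ s, Pi.single j (m j)) ∈ S := by
      intro s
      induction s using Finset.induction_on with
      | empty => rw [Finset.sum_empty, Xm_zero]; exact one_mem _
      | insert j s hj ih =>
        rw [Finset.sum_insert hj, ← Xm_mul]
        exact mul_mem (hsingle _ _) ih
    have := hsum Finset.univ
    rwa [Finset.univ_sum_single] at this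
  intro x
  induction x using AddMonoidAlgebra.induction with
  | zero => exact zero_mem _
  | single_add m c f _ _ ih =>
    refine add_mem ?_ ih
    have hcs : (AddMonoidAlgebra.single m c :
        AddMonoidAlgebra K (Fin (n + 1) → ℤ)) = c • Xm K m := by
      have := AddMonoidAlgebra.smul_single c m (1 : K)
      rw [smul_eq_mul, mul_one] at this
      exact this.symm
    rw [hcs]
    exact Subalgebra.smul_mem _ (hXm m) c

theorem isIntegral_CC (hγ : ∀ i, 1 ≤ γ i) (hdet : T.det ≠ 0)
    (x : AddMonoidAlgebra K (Fin (n + 1) → ℤ)) : IsIntegral (↥(CC T β γ (K := K))) x := by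
  have hx : x ∈ (integralClosure (CC T β γ (K := K))
      (AddMonoidAlgebra K (Fin (n + 1) → ℤ))).restrictScalars K := by
    refine Xm_single_int_mem _ ?_ x
    intro j
    exact ⟨(isIntegral_single T β γ hγ hdet j).1, (isIntegral_single T β γ hγ hdet j).2⟩
  exact hx

end Integral

section Denom

/-- the multiplicative set of special denominators -/
noncomputable def SR : Submonoid (MvPolynomial (Fin (n + 1)) K) :=
  Submonoid.closure ({X 0} ∪ Set.range (gp γ))

theorem Xp_mem_SR : (X 0 : MvPolynomial (Fin (n + 1)) K) ∈ SR γ :=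
  Submonoid.subset_closure (by left; rfl)

theorem gp_mem_SR (i : Fin n) : gp γ i ∈ SR γ (K := K) :=
  Submonoid.subset_closure (by right; exact Set.mem_range_self i)

theorem θ_SR_isUnit (hγ : ∀ i, 1 ≤ γ i) :
    ∀ s ∈ SR γ (K := K), IsUnit (θ T β γ s) := by
  intro s hs
  induction hs using Submonoid.closure_induction with
  | mem z hz =>
    rcases hz with h | ⟨i, rfl⟩
    · rw [Set.mem_singleton_iff] at h
      subst h
      rw [θ_X0]
      exact isUnit_Xm _
    · rw [θ_g T β γ hγ]
      exact isUnit_Xm _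
  | one => rw [map_one]; exact isUnit_one
  | mul a b _ _ ha hb => rw [map_mul]; exact ha.mul hb

theorem CC_denom (hγ : ∀ i, 1 ≤ γ i) :
    ∀ y ∈ CC T β γ (K := K), ∃ h s : MvPolynomial (Fin (n + 1)) K,
      s ∈ SR γ (K := K) ∧ y * θ T β γ s = θ T β γ h := by
  intro y hy
  induction hy using Algebra.adjoin_induction with
  | mem z hz =>
    rcases hz with (⟨i, rfl⟩ | ⟨i, rfl⟩) | hz
    · exact ⟨X i.succ, 1, one_mem _, by rw [map_one, mul_one, θ_Xsucc]⟩
    · refine ⟨1, gp γ i, gp_mem_SR γ i, ?_⟩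
      rw [θ_g T β γ hγ, map_one, Xm_mul, neg_add_cancel, Xm_zero]
    · rcases hz with h | h
      · subst h
        exact ⟨X 0, 1, one_mem _, by rw [map_one, mul_one, θ_X0]⟩
      · rw [Set.mem_singleton_iff] at h
        subst h
        refine ⟨1, X 0, Xp_mem_SR γ, ?_⟩
        rw [θ_X0, map_one, Xm_mul, neg_add_cancel, Xm_zero]
  | algebraMap r =>
    exact ⟨C r, 1, one_mem _, by rw [map_one, mul_one]; simp⟩
  | add a b _ _ ha hb =>
    obtain ⟨h1, s1, hs1, e1⟩ := ha
    obtain ⟨h2, s2, hs2, e2⟩ := hb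
    refine ⟨h1 * s2 + h2 * s1, s1 * s2, mul_mem hs1 hs2, ?_⟩
    rw [map_mul, map_add, map_mul, map_mul, ← e1, ← e2]
    ring
  | mul a b _ _ ha hb =>
    obtain ⟨h1, s1, hs1, e1⟩ := ha
    obtain ⟨h2, s2, hs2, e2⟩ := hb
    refine ⟨h1 * h2, s1 * s2, mul_mem hs1 hs2, ?_⟩
    rw [map_mul, map_mul, ← e1, ← e2]
    ring

end Denom

section PolyFacts

theorem fse_rename (Q : MvPolynomial (Fin n) K) :
    finSuccEquiv K n (rename Fin.succ Q) = Polynomial.C Q := by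
  induction Q using MvPolynomial.induction_on with
  | C a =>
    rw [rename_C]
    rw [show (C a : MvPolynomial (Fin (n + 1)) K) = algebraMap K _ a from rfl,
      AlgEquiv.commutes]
    rfl
  | add p q hp hq => rw [map_add, map_add, hp, hq, map_add]
  | mul_X p j hp => rw [map_mul, map_mul, rename_X, finSuccEquiv_X_succ, hp, ← Polynomial.C_mul]

theorem dvd_C_poly {Q : MvPolynomial (Fin n) K} (hQ : Q ≠ 0)
    {h : Polynomial (MvPolynomial (Fin n) K)} (hdvd : h ∣ Polynomial.C Q) :
    ∃ r0 : MvPolynomial (Fin n) K, h = Polynomial.C r0 ∧ r0 ∣ Q := by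
  obtain ⟨k, hk⟩ := hdvd
  have hCQ : (Polynomial.C Q : Polynomial (MvPolynomial (Fin n) K)) ≠ 0 := by
    simpa using hQ
  have hh : h ≠ 0 := by rintro rfl; rw [zero_mul] at hk; exact hCQ hk
  have hkk : k ≠ 0 := by rintro rfl; rw [mul_zero] at hk; exact hCQ hk
  have hdeg : h.natDegree = 0 ∧ k.natDegree = 0 := by
    have h1 : h.natDegree + k.natDegree = 0 := by
      rw [← Polynomial.natDegree_mul hh hkk, ← hk, Polynomial.natDegree_C]
    omega
  obtain ⟨r0, hr0⟩ := Polynomial.natDegree_eq_zero.mp hdeg.1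
  obtain ⟨k0, hk0⟩ := Polynomial.natDegree_eq_zero.mp hdeg.2
  refine ⟨r0, hr0.symm, k0, ?_⟩
  have : Polynomial.C Q = Polynomial.C (r0 * k0) := by
    rw [hk, ← hr0, ← hk0, Polynomial.C_mul]
  exact Polynomial.C_injective this

theorem isRelPrime_rename {P Q : MvPolynomial (Fin n) K} (hP : P ≠ 0) (hQ : Q ≠ 0)
    (h : IsRelPrime P Q) :
    IsRelPrime (rename Fin.succ P : MvPolynomial (Fin (n + 1)) K) (rename Fin.succ Q) := by
  intro r hrP hrQ
  have h1 : finSuccEquiv K n r ∣ Polynomial.C P := by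
    rw [← fse_rename P]
    exact map_dvd _ hrP
  have h2 : finSuccEquiv K n r ∣ Polynomial.C Q := by
    rw [← fse_rename Q]
    exact map_dvd _ hrQ
  obtain ⟨r0, hr0, hr0P⟩ := dvd_C_poly hP h1
  obtain ⟨r0', hr0', hr0Q⟩ := dvd_C_poly hQ h2
  have : r0 = r0' := Polynomial.C_injective (hr0 ▸ hr0' ▸ rfl)
  subst this
  have hu : IsUnit r0 := h hr0P hr0Q
  have : IsUnit (finSuccEquiv K n r) := hr0 ▸ Polynomial.isUnit_C.mpr hu
  have := this.map (finSuccEquiv K n).symm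
  rwa [AlgEquiv.symm_apply_apply] at this

theorem isUnit_of_dvd_SR (hγ : ∀ i, 1 ≤ γ i) {Q : MvPolynomial (Fin n) K} (hQ0 : Q ≠ 0)
    {s : MvPolynomial (Fin (n + 1)) K} (hs : s ∈ SR γ (K := K))
    (hdvd : rename Fin.succ Q ∣ s) : IsUnit (rename Fin.succ Q : MvPolynomial (Fin (n + 1)) K) := by
  by_contra hu
  have hQ' : (rename Fin.succ Q : MvPolynomial (Fin (n + 1)) K) ≠ 0 := by
    intro h0
    exact hQ0 ((map_eq_zero_iff _ (rename_injective _ (Fin.succ_injective n))).mp h0)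
  obtain ⟨r, hr, hrQ⟩ := WfDvdMonoid.exists_irreducible_factor hu hQ'
  have hrprime : Prime r := UniqueFactorizationMonoid.irreducible_iff_prime.mp hr
  have hrs : r ∣ s := hrQ.trans hdvd
  -- r divides some generator
  have hgenaux : ∀ s' : MvPolynomial (Fin (n + 1)) K, s' ∈ SR γ (K := K) → r ∣ s' →
      ∃ z ∈ ({X 0} ∪ Set.range (gp γ) : Set (MvPolynomial (Fin (n + 1)) K)), r ∣ z := by
    intro s' hs'
    induction hs' using Submonoid.closure_induction with
    | mem z hz => exact fun hd => ⟨z, hz, hd⟩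
    | one => exact fun hd => absurd (isUnit_of_dvd_one hd) hrprime.not_unit
    | mul a b _ _ ha hb => exact fun hd => (hrprime.2.2 a b hd).elim ha hb
  obtain ⟨z, hz, hrz⟩ := hgenaux s hs hrs
  -- r also divides the "constant" rename Fin.succ Q, so its image under
  -- finSuccEquiv is a nonzero constant times a unit
  have h1 : finSuccEquiv K n r ∣ Polynomial.C Q := by
    rw [← fse_rename Q]
    exact map_dvd _ hrQ
  obtain ⟨r0, hr0, _⟩ := dvd_C_poly hQ0 h1
  have hr0nu : ¬IsUnit r0 := by
    intro hu0
    have : IsUnit (finSuccEquiv K n r) := hr0 ▸ Polynomial.isUnit_C.mpr hu0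
    have := this.map (finSuccEquiv K n).symm
    rw [AlgEquiv.symm_apply_apply] at this
    exact hr.not_isUnit this
  -- now analyse the generator
  have hr0u : IsUnit r0 := by
    rcases hz with h | ⟨i, rfl⟩
    · rw [Set.mem_singleton_iff] at h
      subst h
      have h2 : finSuccEquiv K n r ∣ Polynomial.X := by
        rw [← finSuccEquiv_X_zero (R := K) (n := n)]
        exact map_dvd _ hrz
      rw [hr0] at h2
      obtain ⟨k, hk⟩ := h2
      have hc : (1 : MvPolynomial (Fin n) K) = r0 * k.coeff 1 := by
        have := congrArg (fun p => Polynomial.coeff p 1) hk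
        simpa [Polynomial.coeff_C_mul] using this
      exact IsUnit.of_mul_eq_one _ hc.symm
    · have h2 : finSuccEquiv K n r ∣
          Polynomial.X ^ (γ i).toNat - Polynomial.C (X i) := by
        have : finSuccEquiv K n (gp γ i) =
            Polynomial.X ^ (γ i).toNat - Polynomial.C (X i) := by
          rw [gp, map_sub, map_pow, finSuccEquiv_X_zero, finSuccEquiv_X_succ]
        rw [← this]
        exact map_dvd _ hrz
      rw [hr0] at h2
      obtain ⟨k, hk⟩ := h2
      have hγpos : (γ i).toNat ≠ 0 := by
        have := hγ i
        omega
      have hc : (1 : MvPolynomial (Fin n) K) = r0 * k.coeff ((γ i).toNat) := by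
        have := congrArg (fun p => Polynomial.coeff p ((γ i).toNat)) hk
        simpa [Polynomial.coeff_C_mul, Polynomial.coeff_X_pow, Polynomial.coeff_C,
          hγpos] using this
      exact IsUnit.of_mul_eq_one _ hc.symm
  exact hr0nu hr0u

end PolyFacts

section MainLemma

theorem vv_comp_succ : (vv T β γ (K := K)) ∘ Fin.succ = kurodaPi K n T β γ := by
  funext i
  show vv T β γ i.succ = _
  unfold vv
  exact Fin.cases_succ _

theorem ev_eq (Q : MvPolynomial (Fin n) K) :
    aeval (kurodaPi K n T β γ) Q = θ T β γ (rename Fin.succ Q) := by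
  rw [θ, aeval_rename, vv_comp_succ]

theorem main_frac (hγ : ∀ i, 1 ≤ γ i) (hdet : T.det ≠ 0)
    (x : AddMonoidAlgebra K (Fin (n + 1) → ℤ))
    (p q : MvPolynomial (Fin n) K)
    (hq : aeval (kurodaPi K n T β γ) q ≠ 0)
    (hx : x * aeval (kurodaPi K n T β γ) q = aeval (kurodaPi K n T β γ) p) :
    x ∈ Algebra.adjoin K (Set.range (kurodaPi K n T β γ)) := by
  haveI : IsDomain (AddMonoidAlgebra K (Fin (n + 1) → ℤ)) := NoZeroDivisors.to_isDomain _
  have hθinj : Function.Injective (θ T β γ (K := K)) := θ_inj T β γ hγ hdet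
  have hrinj : Function.Injective
      (rename (Fin.succ : Fin n → Fin (n + 1)) : MvPolynomial (Fin n) K → _) :=
    rename_injective _ (Fin.succ_injective n)
  have hevinj : Function.Injective (aeval (kurodaPi K n T β γ) :
      MvPolynomial (Fin n) K →ₐ[K] _) := by
    intro a b hab
    rw [ev_eq, ev_eq] at hab
    exact hrinj (hθinj hab)
  rw [Algebra.adjoin_range_eq_range_aeval]
  by_cases hp0 : p = 0
  · subst hp0
    rw [map_zero] at hx
    have hx0 : x = 0 := by
      rcases mul_eq_zero.mp hx with h | h
      · exact h
      · exact absurd h hq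
    exact ⟨0, by rw [map_zero, hx0]⟩
  have hq0 : q ≠ 0 := fun h => hq (by rw [h, map_zero])
  obtain ⟨P₀, Q₀, g, hrel, hgP, hgQ⟩ := UniqueFactorizationMonoid.exists_reduced_factors p hp0 q
  have hg0 : g ≠ 0 := fun h => hp0 (by rw [← hgP, h, zero_mul])
  have hP0 : P₀ ≠ 0 := fun h => hp0 (by rw [← hgP, h, mul_zero])
  have hQ0 : Q₀ ≠ 0 := fun h => hq0 (by rw [← hgQ, h, mul_zero])
  have hevg : aeval (kurodaPi K n T β γ) g ≠ 0 := fun h => hg0 (hevinj (by rw [h, map_zero]))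
  have hevQ0 : aeval (kurodaPi K n T β γ) Q₀ ≠ 0 :=
    fun h => hQ0 (hevinj (by rw [h, map_zero]))
  -- reduced fraction equation
  have hfrac' : x * aeval (kurodaPi K n T β γ) Q₀ = aeval (kurodaPi K n T β γ) P₀ := by
    have h1 : (aeval (kurodaPi K n T β γ) g) * (x * aeval (kurodaPi K n T β γ) Q₀) =
        (aeval (kurodaPi K n T β γ) g) * aeval (kurodaPi K n T β γ) P₀ := by
      rw [← hgP, ← hgQ, map_mul, map_mul] at hx
      ring_nf
      ring_nf at hx
      linear_combination hx
    exact mul_left_cancel₀ hevg h1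
  have hfrac : x * θ T β γ (rename Fin.succ Q₀) = θ T β γ (rename Fin.succ P₀) := by
    rw [← ev_eq, ← ev_eq]
    exact hfrac'
  -- the integral equation for x over CC
  obtain ⟨F, hmon, hev⟩ := isIntegral_CC T β γ hγ hdet x
  set m := F.natDegree with hm
  set cl : ℕ → AddMonoidAlgebra K (Fin (n + 1) → ℤ) :=
    fun l => ((F.coeff l : ↥(CC T β γ (K := K))) : AddMonoidAlgebra K (Fin (n + 1) → ℤ))
    with hcl
  have hBsum : x ^ m + ∑ l ∈ Finset.range m, cl l * x ^ l = 0 := by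
    have h1 := Polynomial.eval₂_eq_sum_range
      (algebraMap (↥(CC T β γ (K := K))) (AddMonoidAlgebra K (Fin (n + 1) → ℤ))) x (p := F)
    rw [hev] at h1
    rw [Finset.sum_range_succ, ← hm, hmon.coeff_natDegree, map_one, one_mul] at h1
    have h2 : ∀ l, (algebraMap (↥(CC T β γ (K := K)))
        (AddMonoidAlgebra K (Fin (n + 1) → ℤ))) (F.coeff l) = cl l := fun l => rfl
    rw [Finset.sum_congr rfl (fun l _ => by rw [h2])] at h1
    linear_combination -h1
  -- denominators for the coefficients
  choose Hl sl hslmem hseq using fun l : ℕ =>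
    CC_denom T β γ hγ (cl l) (F.coeff l).2
  have hsbar_mem : (∏ l ∈ Finset.range m, sl l) ∈ SR γ (K := K) :=
    Submonoid.prod_mem _ (fun l _ => hslmem l)
  -- the key identity in the polynomial ring
  have hkey : θ T β γ (rename Fin.succ P₀ ^ m * (∏ l ∈ Finset.range m, sl l) +
      rename Fin.succ Q₀ * (∑ l ∈ Finset.range m,
        (Hl l * ∏ l' ∈ (Finset.range m).erase l, sl l') * rename Fin.succ P₀ ^ l *
          rename Fin.succ Q₀ ^ (m - l - 1))) = 0 := by
    have hW : θ T β γ (rename Fin.succ Q₀) * θ T β γ (∑ l ∈ Finset.range m,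
        (Hl l * ∏ l' ∈ (Finset.range m).erase l, sl l') * rename Fin.succ P₀ ^ l *
          rename Fin.succ Q₀ ^ (m - l - 1)) =
        ∑ l ∈ Finset.range m, cl l * x ^ l *
          ((∏ l' ∈ Finset.range m, θ T β γ (sl l')) *
            θ T β γ (rename Fin.succ Q₀) ^ m) := by
      rw [map_sum, Finset.mul_sum]
      refine Finset.sum_congr rfl ?_
      intro l hl
      have hlm : l < m := Finset.mem_range.mp hl
      rw [map_mul, map_mul, map_mul, map_prod, map_pow, map_pow, ← hfrac]
      have h5 : θ T β γ (sl l) * ∏ l' ∈ (Finset.range m).erase l, θ T β γ (sl l') =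
          ∏ l' ∈ Finset.range m, θ T β γ (sl l') :=
        Finset.mul_prod_erase (Finset.range m) (fun l' => θ T β γ (sl l')) hl
      have h6 : θ T β γ (rename Fin.succ Q₀) ^ m =
          θ T β γ (rename Fin.succ Q₀) *
            (θ T β γ (rename Fin.succ Q₀) ^ l *
              θ T β γ (rename Fin.succ Q₀) ^ (m - l - 1)) := by
        rw [← pow_add, ← pow_succ']
        congr 1
        omega
      rw [← hseq l, mul_pow, ← h5, h6]
      ring
    calc θ T β γ (rename Fin.succ P₀ ^ m * (∏ l ∈ Finset.range m, sl l) +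
        rename Fin.succ Q₀ * (∑ l ∈ Finset.range m,
          (Hl l * ∏ l' ∈ (Finset.range m).erase l, sl l') * rename Fin.succ P₀ ^ l *
            rename Fin.succ Q₀ ^ (m - l - 1)))
        = θ T β γ (rename Fin.succ P₀) ^ m * θ T β γ (∏ l ∈ Finset.range m, sl l) +
          θ T β γ (rename Fin.succ Q₀) * θ T β γ (∑ l ∈ Finset.range m,
            (Hl l * ∏ l' ∈ (Finset.range m).erase l, sl l') * rename Fin.succ P₀ ^ l *
              rename Fin.succ Q₀ ^ (m - l - 1)) := by
          rw [map_add, map_mul, map_mul, map_pow]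
      _ = (x * θ T β γ (rename Fin.succ Q₀)) ^ m *
            (∏ l' ∈ Finset.range m, θ T β γ (sl l')) +
          ∑ l ∈ Finset.range m, cl l * x ^ l *
            ((∏ l' ∈ Finset.range m, θ T β γ (sl l')) *
              θ T β γ (rename Fin.succ Q₀) ^ m) := by
          rw [map_prod, ← hfrac, hW]
      _ = (x ^ m + ∑ l ∈ Finset.range m, cl l * x ^ l) *
            ((∏ l' ∈ Finset.range m, θ T β γ (sl l')) *
              θ T β γ (rename Fin.succ Q₀) ^ m) := by
          rw [add_mul, Finset.sum_mul, mul_pow]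
          ring
      _ = 0 := by rw [hBsum, zero_mul]
  -- deduce divisibility in the polynomial ring
  have hzero : rename Fin.succ P₀ ^ m * (∏ l ∈ Finset.range m, sl l) +
      rename Fin.succ Q₀ * (∑ l ∈ Finset.range m,
        (Hl l * ∏ l' ∈ (Finset.range m).erase l, sl l') * rename Fin.succ P₀ ^ l *
          rename Fin.succ Q₀ ^ (m - l - 1)) = 0 := by
    apply hθinj
    rw [hkey, map_zero]
  have hdvd : rename Fin.succ Q₀ ∣
      (∏ l ∈ Finset.range m, sl l) * rename Fin.succ P₀ ^ m := by
    refine ⟨-(∑ l ∈ Finset.range m,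
      (Hl l * ∏ l' ∈ (Finset.range m).erase l, sl l') * rename Fin.succ P₀ ^ l *
        rename Fin.succ Q₀ ^ (m - l - 1)), ?_⟩
    linear_combination hzero
  -- coprimality transfers, so the denominator divides the unit monomial part
  have hrelR : IsRelPrime (rename Fin.succ Q₀ : MvPolynomial (Fin (n + 1)) K)
      ((rename Fin.succ P₀ : MvPolynomial (Fin (n + 1)) K) ^ m) :=
    ((isRelPrime_rename hP0 hQ0 hrel).symm).pow_right
  have hdvd_sbar : rename Fin.succ Q₀ ∣ (∏ l ∈ Finset.range m, sl l) :=
    hrelR.dvd_of_dvd_mul_right hdvd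
  have hQunit : IsUnit (rename Fin.succ Q₀ : MvPolynomial (Fin (n + 1)) K) :=
    isUnit_of_dvd_SR γ hγ hQ0 hsbar_mem hdvd_sbar
  -- conclude: Q₀ is a unit in the small polynomial ring
  have hQ0unit : IsUnit Q₀ := by
    have h1 : IsUnit (finSuccEquiv K n (rename Fin.succ Q₀)) := hQunit.map _
    rw [fse_rename] at h1
    exact Polynomial.isUnit_C.mp h1
  obtain ⟨u, hu⟩ := hQ0unit
  refine ⟨P₀ * (↑u⁻¹ : MvPolynomial (Fin n) K), ?_⟩
  have hchk : (aeval (kurodaPi K n T β γ)) (P₀ * (↑u⁻¹ : MvPolynomial (Fin n) K)) *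
      (aeval (kurodaPi K n T β γ)) Q₀ = (aeval (kurodaPi K n T β γ)) P₀ := by
    rw [← map_mul]
    congr 1
    rw [mul_assoc, ← hu, Units.inv_mul, mul_one]
  have := hchk.trans hfrac'.symm
  exact mul_right_cancel₀ hevQ0 this

end MainLemma
end Main
end Kuroda8


/-- If `det T_{n-1} ≠ 0` then `K(π) ∩ K[X₁, …, Xₙ] = K[π] ∩ K[X₁, …, Xₙ]`:
a polynomial (element of the polynomial subring of the Laurent polynomial ring)
is a fraction of two elements of `K[π]` iff it lies in `K[π]`. -/
theorem stmt_8 (K : Type*) [Field K] (n : ℕ)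
    (T : Matrix (Fin n) (Fin n) ℤ) (β γ : Fin n → ℤ)
    (hγ : ∀ i, 1 ≤ γ i)
    (hdiag : ∀ i, T i i ≤ -1)
    (hoff : ∀ i j, i ≠ j → 1 ≤ T i j)
    (hβ : ∀ i, 0 ≤ β i)
    (hdet : T.det ≠ 0) :
    ∀ x : AddMonoidAlgebra K (Fin (n + 1) → ℤ),
      x ∈ Algebra.adjoin K
        (Set.range fun j : Fin (n + 1) =>
          AddMonoidAlgebra.single (Pi.single j 1 : Fin (n + 1) → ℤ) (1 : K)) →
      ((∃ p q : Algebra.adjoin K (Set.range (kurodaPi K n T β γ)), q ≠ 0 ∧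
          x * (q : AddMonoidAlgebra K (Fin (n + 1) → ℤ)) = p) ↔
        x ∈ Algebra.adjoin K (Set.range (kurodaPi K n T β γ))) := by
  intro x _hx
  constructor
  · rintro ⟨p, q, hq, hxq⟩
    have hpr : (↑p : AddMonoidAlgebra K (Fin (n + 1) → ℤ)) ∈
        Algebra.adjoin K (Set.range (kurodaPi K n T β γ)) := p.2
    have hqr : (↑q : AddMonoidAlgebra K (Fin (n + 1) → ℤ)) ∈
        Algebra.adjoin K (Set.range (kurodaPi K n T β γ)) := q.2
    have hpr' : (↑p : AddMonoidAlgebra K (Fin (n + 1) → ℤ)) ∈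
        (MvPolynomial.aeval (kurodaPi K n T β γ) :
          MvPolynomial (Fin n) K →ₐ[K] AddMonoidAlgebra K (Fin (n + 1) → ℤ)).range := by
      rw [← Algebra.adjoin_range_eq_range_aeval]; exact hpr
    have hqr' : (↑q : AddMonoidAlgebra K (Fin (n + 1) → ℤ)) ∈
        (MvPolynomial.aeval (kurodaPi K n T β γ) :
          MvPolynomial (Fin n) K →ₐ[K] AddMonoidAlgebra K (Fin (n + 1) → ℤ)).range := by
      rw [← Algebra.adjoin_range_eq_range_aeval]; exact hqr
    obtain ⟨P, hP⟩ := hpr'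
    obtain ⟨Q, hQ⟩ := hqr' 
    have hq' : MvPolynomial.aeval (kurodaPi K n T β γ) Q ≠ 0 := by
      rw [show (MvPolynomial.aeval (kurodaPi K n T β γ)) Q =
        ((MvPolynomial.aeval (kurodaPi K n T β γ)).toRingHom Q) from rfl, hQ]
      intro h
      exact hq (Subtype.ext h)
    refine Kuroda8.main_frac T β γ hγ hdet x P Q hq' ?_
    rw [show (MvPolynomial.aeval (kurodaPi K n T β γ)) Q =
        ((MvPolynomial.aeval (kurodaPi K n T β γ)).toRingHom Q) from rfl, hQ,
      show (MvPolynomial.aeval (kurodaPi K n T β γ)) P =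
        ((MvPolynomial.aeval (kurodaPi K n T β γ)).toRingHom P) from rfl, hP]
    exact hxq
  · intro hmem
    refine ⟨⟨x, hmem⟩, 1, ?_, ?_⟩
    · intro h
      have h2 : ((1 : Algebra.adjoin K (Set.range (kurodaPi K n T β γ))) :
          AddMonoidAlgebra K (Fin (n + 1) → ℤ)) = 0 := by
        rw [h]
        rfl
      rw [OneMemClass.coe_one] at h2
      exact one_ne_zero h2
    · rw [OneMemClass.coe_one, mul_one]
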